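/- Let f be a density on [0,1] with 0 < f_lower ≤ f(v) ≤ f_upper < ∞ and fix w₁, w₂ with 0 ≤ w₁ < w₂ ≤ 1 satisfying the equal profit condition ∫_{w₁}^{w₂}(v−w₁)f(v)dv = ∫_{w₂}^1(v−w₂)f(v)dv and the no-block condition ∫_{w₁}^{w₂}(v−w₁)f(v)dv ≥ ∫_0^{w₁} v f(v)dv. Then for every common deviation wage w ∈ [0,1]: (a) if w < w₁ then ∫_w^{w₁}(v−w)f(v)dv ≤ ∫_{w₁}^{w₂}(v−w₁)f(v)dv; (b) if w₁ ≤ w < w₂ then ∫_w^{w₂}(v−w)f(v)dv ≤ ∫_{w₁}^{w₂}(v−w₁)f(v)dv; (c) if w ≥ w₂ then ∫_w^1(v−w)f(v)dv ≤ ∫_{w₂}^1(v−w₂)f(v)dv. -/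
import Mathlib


open MeasureTheory Set intervalIntegral

/-- Deviation-profit bounds under non-group-based EPSW: given the equal-profit and no-block
conditions for equilibrium wages `w₁ < w₂`, no common deviation wage `w ∈ [0,1]` yields a
profit exceeding the equilibrium profit, in each of the three wage regions. -/
theorem stmt13 (flower fupper : ℝ) (hfl : 0 < flower)
    (f : ℝ → ℝ) (hm : Measurable f)
    (hlb : ∀ v ∈ Set.Icc (0:ℝ) 1, flower ≤ f v)
    (hub : ∀ v ∈ Set.Icc (0:ℝ) 1, f v ≤ fupper)
    (w₁ w₂ : ℝ) (h0 : 0 ≤ w₁) (h12 : w₁ < w₂) (h21 : w₂ ≤ 1)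
    (heqprofit : (∫ v in w₁..w₂, (v - w₁) * f v) = ∫ v in w₂..1, (v - w₂) * f v)
    (hnoblock : (∫ v in (0:ℝ)..w₁, v * f v) ≤ ∫ v in w₁..w₂, (v - w₁) * f v) :
    ∀ w ∈ Set.Icc (0:ℝ) 1,
      (w < w₁ → (∫ v in w..w₁, (v - w) * f v) ≤ ∫ v in w₁..w₂, (v - w₁) * f v) ∧
      (w₁ ≤ w → w < w₂ →
        (∫ v in w..w₂, (v - w) * f v) ≤ ∫ v in w₁..w₂, (v - w₁) * f v) ∧
      (w₂ ≤ w → (∫ v in w..1, (v - w) * f v) ≤ ∫ v in w₂..1, (v - w₂) * f v) := by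
  have hfnn : ∀ v ∈ Set.Icc (0:ℝ) 1, 0 ≤ f v := fun v hv => hfl.le.trans (hlb v hv)
  have hfu : 0 < fupper := lt_of_lt_of_le hfl (le_trans (hlb 0 (by norm_num)) (hub 0 (by norm_num)))
  -- integrability of (v - c) * f v on subintervals of [0,1]
  have hint : ∀ (c a b : ℝ), a ∈ Set.Icc (0:ℝ) 1 → b ∈ Set.Icc (0:ℝ) 1 →
      IntervalIntegrable (fun v => (v - c) * f v) volume a b := by
    intro c a b ha hb
    rw [intervalIntegrable_iff]
    apply MeasureTheory.Measure.integrableOn_of_bounded (M := (1 + |c|) * fupper)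
    · exact (measure_Ioc_lt_top).ne
    · exact ((measurable_id.sub measurable_const).mul hm).aestronglyMeasurable
    · filter_upwards [ae_restrict_mem measurableSet_uIoc] with v hv
      have hv01 : v ∈ Set.Icc (0:ℝ) 1 := by
        rcases hv with ⟨h1, h2⟩
        constructor
        · exact le_of_lt (lt_of_le_of_lt (le_min ha.1 hb.1) h1)
        · exact le_trans h2 (max_le ha.2 hb.2)
      have h1 : |v - c| ≤ 1 + |c| := by
        calc |v - c| ≤ |v| + |c| := abs_sub v c
        _ ≤ 1 + |c| := by
            have : |v| ≤ 1 := abs_le.mpr ⟨by linarith [hv01.1], hv01.2⟩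
            linarith
      have h2 : |f v| ≤ fupper := by
        rw [abs_of_nonneg (hfnn v hv01)]; exact hub v hv01
      calc ‖(v - c) * f v‖ = |v - c| * |f v| := by rw [Real.norm_eq_abs, abs_mul]
      _ ≤ (1 + |c|) * fupper := by
          apply mul_le_mul h1 h2 (abs_nonneg _)
          positivity
  -- monotonicity helper: w₁' ≤ w ≤ b, all in [0,1]
  have key : ∀ (a w b : ℝ), 0 ≤ a → a ≤ w → w ≤ b → b ≤ 1 →
      (∫ v in w..b, (v - w) * f v) ≤ ∫ v in a..b, (v - a) * f v := by
    intro a w b ha haw hwb hb1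
    have haI : a ∈ Set.Icc (0:ℝ) 1 := ⟨ha, by linarith⟩
    have hwI : w ∈ Set.Icc (0:ℝ) 1 := ⟨by linarith, by linarith⟩
    have hbI : b ∈ Set.Icc (0:ℝ) 1 := ⟨by linarith, hb1⟩
    have hsplit : (∫ v in a..b, (v - a) * f v)
        = (∫ v in a..w, (v - a) * f v) + ∫ v in w..b, (v - a) * f v :=
      (integral_add_adjacent_intervals (hint a a w haI hwI) (hint a w b hwI hbI)).symm
    have h1 : 0 ≤ ∫ v in a..w, (v - a) * f v := by
      apply intervalIntegral.integral_nonneg haw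
      intro v hv
      have : f v ≥ 0 := hfnn v ⟨by linarith [hv.1], by linarith [hv.2]⟩
      have : v - a ≥ 0 := by linarith [hv.1]
      positivity
    have h2 : (∫ v in w..b, (v - w) * f v) ≤ ∫ v in w..b, (v - a) * f v := by
      apply intervalIntegral.integral_mono_on hwb (hint w w b hwI hbI) (hint a w b hwI hbI)
      intro v hv
      have hfv : 0 ≤ f v := hfnn v ⟨by linarith [hv.1], by linarith [hv.2]⟩
      have : v - w ≤ v - a := by linarith
      exact mul_le_mul_of_nonneg_right this hfv
    linarith
  intro w hw
  refine ⟨?_, ?_, ?_⟩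
  · -- case (a): w < w₁
    intro hww₁
    have hwI : w ∈ Set.Icc (0:ℝ) 1 := hw
    have hw₁I : w₁ ∈ Set.Icc (0:ℝ) 1 := ⟨h0, by linarith⟩
    have h0I : (0:ℝ) ∈ Set.Icc (0:ℝ) 1 := by norm_num
    have step1 : (∫ v in w..w₁, (v - w) * f v) ≤ ∫ v in w..w₁, v * f v := by
      have := intervalIntegral.integral_mono_on hww₁.le (hint w w w₁ hwI hw₁I)
        (by simpa using hint 0 w w₁ hwI hw₁I)
        (fun v hv => by
          have hfv : 0 ≤ f v := hfnn v ⟨by linarith [hv.1, hw.1], by linarith [hv.2, hw₁I.2]⟩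
          have : v - w ≤ v := by linarith [hw.1]
          exact mul_le_mul_of_nonneg_right this hfv)
      simpa using this
    have step2 : (∫ v in w..w₁, v * f v) ≤ ∫ v in (0:ℝ)..w₁, v * f v := by
      have hsplit : (∫ v in (0:ℝ)..w₁, v * f v)
          = (∫ v in (0:ℝ)..w, v * f v) + ∫ v in w..w₁, v * f v := by
        have := integral_add_adjacent_intervals
          (by simpa using hint 0 0 w h0I hwI) (by simpa using hint 0 w w₁ hwI hw₁I)
        simpa using this.symm
      have h1 : 0 ≤ ∫ v in (0:ℝ)..w, v * f v := by
        apply intervalIntegral.integral_nonneg hw.1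
        intro v hv
        have hfv : 0 ≤ f v := hfnn v ⟨hv.1, by linarith [hv.2, hw.2]⟩
        have : 0 ≤ v := hv.1
        positivity
      linarith
    linarith
  · intro h₁w hww₂
    exact key w₁ w w₂ h0 h₁w hww₂.le h21
  · intro h₂w
    exact key w₂ w 1 (by linarith) h₂w hw.2 le_rfl
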